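/- Let m ≥ 2 and consider the two-stage instance with n = m, c = 0, A = 0, d = e (the all-ones vector of ℝ^m), uncertainty set U = conv({0, e₁, …, e_m, ν₁, …, ν_m}) where ν_i = (1/√m)(e − e_i), and matrix B ∈ ℝ^{m×m} with B_ii = 1 and B_ij = 1/√m for i ≠ j. Then the optimal affine-policy value satisfies z_Aff(B) ≥ (m−1)/(6√m). -/

import Mathlib

open Matrix MeasureTheory ProbabilityTheory

/-- Optimal value of the two-stage adjustable robust problem. -/
noncomputable def zAR {m n : ℕ} (U : Set (Fin m → ℝ)) (c d : Fin n → ℝ)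
    (A B : Matrix (Fin m) (Fin n) ℝ) : EReal :=
  ⨅ x : {x : Fin n → ℝ // 0 ≤ x},
    ((c ⬝ᵥ (x : Fin n → ℝ) : ℝ) : EReal) +
      ⨆ h : U,
        ⨅ _y : {y : Fin n → ℝ // 0 ≤ y ∧
            (h : Fin m → ℝ) ≤ A *ᵥ (x : Fin n → ℝ) + B *ᵥ y},
          ((d ⬝ᵥ (_y : Fin n → ℝ) : ℝ) : EReal)

/-- Optimal value of the affine-policy problem. -/
noncomputable def zAff {m n : ℕ} (U : Set (Fin m → ℝ)) (c d : Fin n → ℝ)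
    (A B : Matrix (Fin m) (Fin n) ℝ) : EReal :=
  ⨅ p : {p : (Fin n → ℝ) × Matrix (Fin n) (Fin m) ℝ × (Fin n → ℝ) //
      0 ≤ p.1 ∧ ∀ h ∈ U, 0 ≤ p.2.1 *ᵥ h + p.2.2 ∧
        h ≤ A *ᵥ p.1 + B *ᵥ (p.2.1 *ᵥ h + p.2.2)},
    ((c ⬝ᵥ p.1.1 : ℝ) : EReal) +
      ⨆ h : U, ((d ⬝ᵥ (p.1.2.1 *ᵥ (h : Fin m → ℝ) + p.1.2.2) : ℝ) : EReal)

/-- The polyhedral uncertainty set. -/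
def polyU {m L : ℕ} (R : Matrix (Fin L) (Fin m) ℝ) (r : Fin L → ℝ) : Set (Fin m → ℝ) :=
  {h | 0 ≤ h ∧ R *ᵥ h ≤ r}

/-- The dualized uncertainty set. -/
def dualW {m n : ℕ} (B : Matrix (Fin m) (Fin n) ℝ) (d : Fin n → ℝ) : Set (Fin m → ℝ) :=
  {w | 0 ≤ w ∧ Bᵀ *ᵥ w ≤ d}

/-- Optimal value of the dualized adjustable robust problem. -/
noncomputable def zdAR {m n L : ℕ} (c d : Fin n → ℝ) (A B : Matrix (Fin m) (Fin n) ℝ)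
    (R : Matrix (Fin L) (Fin m) ℝ) (r : Fin L → ℝ) : EReal :=
  ⨅ x : {x : Fin n → ℝ // 0 ≤ x},
    ((c ⬝ᵥ (x : Fin n → ℝ) : ℝ) : EReal) +
      ⨆ w : dualW B d,
        ⨅ l : {l : Fin L → ℝ // 0 ≤ l ∧ (w : Fin m → ℝ) ≤ Rᵀ *ᵥ l},
          ((-(A *ᵥ (x : Fin n → ℝ)) ⬝ᵥ (w : Fin m → ℝ) + r ⬝ᵥ (l : Fin L → ℝ) : ℝ) : EReal)

/-- Optimal value of the dualized affine-policy problem. -/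
noncomputable def zdAff {m n L : ℕ} (c d : Fin n → ℝ) (A B : Matrix (Fin m) (Fin n) ℝ)
    (R : Matrix (Fin L) (Fin m) ℝ) (r : Fin L → ℝ) : EReal :=
  ⨅ p : {p : (Fin n → ℝ) × Matrix (Fin L) (Fin m) ℝ × (Fin L → ℝ) //
      0 ≤ p.1 ∧ ∀ w ∈ dualW B d, 0 ≤ p.2.1 *ᵥ w + p.2.2 ∧
        w ≤ Rᵀ *ᵥ (p.2.1 *ᵥ w + p.2.2)},
    ((c ⬝ᵥ p.1.1 : ℝ) : EReal) +
      ⨆ w : dualW B d,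
        ((-(A *ᵥ p.1.1) ⬝ᵥ (w : Fin m → ℝ) + r ⬝ᵥ (p.1.2.1 *ᵥ (w : Fin m → ℝ) + p.1.2.2) : ℝ) : EReal)
/-- The uncertainty set of the worst-case instance:
`U = conv{0, e₁, …, e_m, ν₁, …, ν_m}` with `νᵢ = (1/√m)(e - eᵢ)`. -/
noncomputable def badU (m : ℕ) : Set (Fin m → ℝ) :=
  convexHull ℝ (insert 0
    (Set.range (fun i : Fin m => (Pi.single i 1 : Fin m → ℝ)) ∪
      Set.range (fun i : Fin m => (Real.sqrt m)⁻¹ • ((1 : Fin m → ℝ) - Pi.single i 1))))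

/-- The worst-case recourse matrix: `B_ii = 1`, `B_ij = 1/√m` for `i ≠ j`. -/
noncomputable def badB (m : ℕ) : Matrix (Fin m) (Fin m) ℝ :=
  Matrix.of fun i j => if i = j then (1 : ℝ) else 1 / Real.sqrt m

lemma arith_key (m : ℕ) (hm : 2 ≤ m) (a Q D σ Z : ℝ) (ha : 0 < a) (ha1 : a < 1)
    (ham : a ^ 2 * m = 1)
    (h1 : (m : ℝ) * (1 - a * Z) ≤ (1 - a) * (Q + D))
    (h2 : a * D - Q ≤ a * σ)
    (h3 : 0 ≤ Q) (h4 : Q ≤ Z)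
    (h5 : (m : ℝ) * Q + a * ((m : ℝ) - 1) * σ ≤ (m : ℝ) * Z) :
    a * ((m : ℝ) - 1) ≤ 6 * Z := by
  have hm2 : (2 : ℝ) ≤ (m : ℝ) := by exact_mod_cast hm
  have hZ0 : 0 ≤ Z := le_trans h3 h4
  have hm1 : (0:ℝ) ≤ (m:ℝ) - 1 := by linarith
  have e2 := mul_le_mul_of_nonneg_left h2 hm1
  have L1 : Q + ((m:ℝ)-1)*(a*D) ≤ (m:ℝ)*Z := by nlinarith [e2, h5]
  have M1 := mul_le_mul_of_nonneg_left L1 (show (0:ℝ) ≤ 1 - a by linarith)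
  have M2 := mul_le_mul_of_nonneg_left h1 (mul_nonneg hm1 ha.le)
  have ha2 : ((m:ℝ)-1)*(a^2*(m:ℝ))*Z = ((m:ℝ)-1)*Z := by rw [ham]; ring
  have MAIN : (1-a)*(1-((m:ℝ)-1)*a)*Q + ((m:ℝ)-1)*a*(m:ℝ) ≤ (1-a)*(m:ℝ)*Z + ((m:ℝ)-1)*Z := by
    nlinarith [M1, M2, ha2]
  rcases le_or_gt (((m:ℝ)-1)*a) 1 with hc | hc
  · nlinarith [MAIN, mul_nonneg (mul_nonneg (show (0:ℝ) ≤ 1-a by linarith)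
      (show (0:ℝ) ≤ 1 - ((m:ℝ)-1)*a by linarith)) h3,
      mul_nonneg (mul_nonneg ha.le (Nat.cast_nonneg m)) hZ0]
  · have hQZ := mul_le_mul_of_nonneg_left h4
      (show (0:ℝ) ≤ (1-a)*(((m:ℝ)-1)*a - 1) by nlinarith)
    have hKm : ((m:ℝ)-1)*a ≤ (m:ℝ) := by nlinarith
    nlinarith [MAIN, hQZ, mul_nonneg (mul_nonneg ha.le (Nat.cast_nonneg m)) hZ0,
      mul_nonneg hZ0 (show (0:ℝ) ≤ (m:ℝ) - ((m:ℝ)-1)*a by linarith),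
      mul_nonneg hZ0 (mul_nonneg ha.le hm1)]

lemma badU_zero (m : ℕ) : (0 : Fin m → ℝ) ∈ badU m :=
  subset_convexHull ℝ _ (Set.mem_insert _ _)

lemma badU_single (m : ℕ) (i : Fin m) : (Pi.single i 1 : Fin m → ℝ) ∈ badU m :=
  subset_convexHull ℝ _ (Set.mem_insert_iff.2 (Or.inr (Or.inl ⟨i, rfl⟩)))

lemma badU_nu (m : ℕ) (i : Fin m) :
    (Real.sqrt m)⁻¹ • ((1 : Fin m → ℝ) - Pi.single i 1) ∈ badU m :=
  subset_convexHull ℝ _ (Set.mem_insert_iff.2 (Or.inr (Or.inr ⟨i, rfl⟩)))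

lemma badU_center (m : ℕ) (hm : 0 < m) :
    ((Real.sqrt m)⁻¹ * ((m : ℝ) - 1) / m) • (1 : Fin m → ℝ) ∈ badU m := by
  have hm0 : (m : ℝ) ≠ 0 := Nat.cast_ne_zero.2 hm.ne'
  have := (convex_convexHull ℝ _).sum_mem (t := Finset.univ)
    (w := fun _ : Fin m => (1 : ℝ) / m)
    (z := fun i : Fin m => (Real.sqrt m)⁻¹ • ((1 : Fin m → ℝ) - Pi.single i 1))
    (fun i _ => by positivity)
    (by simp [Finset.sum_const, Finset.card_univ]; field_simp)
    (fun i _ => badU_nu m i)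
  convert this using 1
  · rfl
  funext j
  simp only [Finset.sum_apply, Pi.smul_apply, Pi.sub_apply, Pi.one_apply, smul_eq_mul,
    Pi.single_apply]
  rw [Finset.sum_congr rfl (fun i _ => by ring :
    ∀ i ∈ Finset.univ, (1:ℝ)/m * ((Real.sqrt m)⁻¹ * (1 - if j = i then (1:ℝ) else 0)) =
      (1:ℝ)/m * (Real.sqrt m)⁻¹ - (1:ℝ)/m * (Real.sqrt m)⁻¹ * (if j = i then (1:ℝ) else 0))]
  rw [Finset.sum_sub_distrib, Finset.sum_const, Finset.card_univ, Fintype.card_fin,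
    ← Finset.mul_sum, Finset.sum_ite_eq]
  simp only [Finset.mem_univ, if_true, mul_one, Pi.smul_apply, Pi.one_apply, smul_eq_mul,
    nsmul_eq_mul]
  field_simp

lemma badB_mulVec (m : ℕ) (y : Fin m → ℝ) (i : Fin m) :
    (badB m *ᵥ y) i
      = (1 - (Real.sqrt m)⁻¹) * y i + (Real.sqrt m)⁻¹ * ∑ j, y j := by
  simp only [badB, mulVec, dotProduct, Matrix.of_apply]
  rw [Finset.sum_congr rfl (fun j _ => by by_cases h : i = j <;> (simp [h, one_div]; try ring) :
    ∀ j ∈ Finset.univ, (if i = j then (1:ℝ) else 1 / Real.sqrt m) * y j =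
      (Real.sqrt m)⁻¹ * y j + (if i = j then (1 - (Real.sqrt m)⁻¹) * y j else 0))]
  rw [Finset.sum_add_distrib, Finset.sum_ite_eq, ← Finset.mul_sum]
  simp
  ring

/-- For the deterministic worst-case instance, the optimal affine-policy
value is at least `(m-1)/(6√m)`. -/
theorem affine_bad_instance_lower_bound (m : ℕ) (hm : 2 ≤ m) :
    ((((m : ℝ) - 1) / (6 * Real.sqrt m) : ℝ) : EReal) ≤
      zAff (badU m) (0 : Fin m → ℝ) (fun _ => (1 : ℝ)) 0 (badB m) := by
  have hm0 : 0 < m := lt_of_lt_of_le two_pos hm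
  have hmR : (2:ℝ) ≤ (m:ℝ) := by exact_mod_cast hm
  have hmne : (m:ℝ) ≠ 0 := by positivity
  have hs : (1:ℝ) < Real.sqrt m := by
    rw [show (1:ℝ) = Real.sqrt 1 by simp]
    exact Real.sqrt_lt_sqrt (by norm_num) (by linarith)
  have hs0 : (0:ℝ) < Real.sqrt m := by linarith
  set a : ℝ := (Real.sqrt m)⁻¹ with ha_def
  have ha : 0 < a := inv_pos.2 hs0
  have ha1 : a < 1 := by rw [ha_def]; exact inv_lt_one_of_one_lt₀ hs
  have ham : a ^ 2 * m = 1 := by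
    rw [ha_def, inv_pow, Real.sq_sqrt (by positivity : (0:ℝ) ≤ (m:ℝ))]
    exact inv_mul_cancel₀ hmne
  rw [zAff]
  refine le_iInf ?_
  rintro ⟨⟨x, P, q⟩, hx, hfeas⟩
  simp only [zero_dotProduct, EReal.coe_zero, zero_add]
  -- abbreviations
  set Q : ℝ := ∑ j, q j with hQ_def
  set S : Fin m → ℝ := fun i => ∑ j, (P j i + q j) with hS_def
  set D : ℝ := ∑ i, P i i with hD_def
  set σ : ℝ := ∑ i, ∑ j, P i j with hσ_def
  have hrow : ∀ i, (P *ᵥ (1 : Fin m → ℝ)) i = ∑ j, P i j := by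
    intro i; simp [Matrix.mulVec, dotProduct]
  have hcol : ∀ i, P *ᵥ (Pi.single i 1 : Fin m → ℝ) = fun j => P j i := by
    intro i; funext j; simp [Matrix.mulVec_single]
  -- nonnegativity of q
  obtain ⟨hpos0, -⟩ := hfeas 0 (badU_zero m)
  have hq : ∀ j, 0 ≤ q j := by
    intro j; have := hpos0 j; simpa [Matrix.mulVec_zero] using this
  have hQ0 : 0 ≤ Q := Finset.sum_nonneg fun j _ => hq j
  -- constraint at e_i, component i
  have g1 : ∀ i, 1 ≤ (1-a)*(P i i + q i) + a * S i := by
    intro i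
    obtain ⟨-, hcov⟩ := hfeas (Pi.single i 1) (badU_single m i)
    have h := hcov i
    rw [Matrix.zero_mulVec, Pi.add_apply, Pi.zero_apply, zero_add, badB_mulVec,
      hcol i] at h
    simpa [Pi.single_eq_same, hS_def, ← ha_def] using h
  -- nonnegativity at ν_i, component i
  have g2 : ∀ i, 0 ≤ a * ((∑ j, P i j) - P i i) + q i := by
    intro i
    obtain ⟨hpos, -⟩ := hfeas _ (badU_nu m i)
    have h := hpos i
    rw [Pi.add_apply] at h
    rw [Matrix.mulVec_smul, Matrix.mulVec_sub, hcol i] at h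
    simpa [hrow i, ← ha_def, mul_sub] using h
  -- pick maximizing index
  obtain ⟨i0, -, hi0⟩ := Finset.exists_max_image (Finset.univ : Finset (Fin m)) S
    ⟨⟨0, hm0⟩, Finset.mem_univ _⟩
  set T : ℝ := (a * ((m:ℝ)-1)/m) * σ + Q with hT_def
  set Z : ℝ := max (max Q T) (S i0) with hZ_def
  have hQZ : Q ≤ Z := le_trans (le_max_left _ _) (le_max_left _ _)
  have hTZ : T ≤ Z := le_trans (le_max_right _ _) (le_max_left _ _)
  have hSZ : ∀ i, S i ≤ Z := fun i => le_trans (hi0 i (Finset.mem_univ _)) (le_max_right _ _)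
  -- summed constraints
  have h1 : (m:ℝ) * (1 - a * Z) ≤ (1-a) * (Q + D) := by
    have e1 : ∀ i ∈ Finset.univ, 1 - a * Z ≤ (1-a)*(P i i + q i) := by
      intro i _
      have := mul_le_mul_of_nonneg_left (hSZ i) ha.le
      linarith [g1 i]
    have hsum := Finset.sum_le_sum e1
    rw [Finset.sum_const, Finset.card_univ, Fintype.card_fin, nsmul_eq_mul] at hsum
    have : ∑ i, (1-a)*(P i i + q i) = (1-a)*(Q + D) := by
      rw [← Finset.mul_sum, Finset.sum_add_distrib]; ring_nf
      rw [hQ_def, hD_def]; ring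
    linarith [hsum, this.symm.le, this.le]
  have h2 : a * D - Q ≤ a * σ := by
    have hsum := Finset.sum_nonneg (fun i (_ : i ∈ Finset.univ) => g2 i)
    have : ∑ i, (a * ((∑ j, P i j) - P i i) + q i) = a * (σ - D) + Q := by
      rw [Finset.sum_add_distrib, ← Finset.mul_sum, Finset.sum_sub_distrib]
    rw [this] at hsum
    nlinarith [hsum]
  have h5 : (m:ℝ) * Q + a * ((m:ℝ)-1) * σ ≤ (m:ℝ) * Z := by
    have := mul_le_mul_of_nonneg_left hTZ (Nat.cast_nonneg m : (0:ℝ) ≤ (m:ℝ))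
    have heq : (m:ℝ) * T = a * ((m:ℝ)-1) * σ + (m:ℝ) * Q := by
      rw [hT_def]; field_simp
    linarith
  have key := arith_key m hm a Q D σ Z ha ha1 ham h1 h2 hQ0 hQZ h5
  have hbZ : ((m:ℝ)-1) / (6 * Real.sqrt m) ≤ Z := by
    have hb : a * ((m:ℝ)-1) / 6 = ((m:ℝ)-1) / (6 * Real.sqrt m) := by
      rw [ha_def, inv_mul_eq_div, div_div, mul_comm]
    rw [← hb]; linarith
  -- dot product values
  have hdotQ : (fun _ => (1:ℝ)) ⬝ᵥ (P *ᵥ (0 : Fin m → ℝ) + q) = Q := by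
    simp [dotProduct, Matrix.mulVec_zero, hQ_def]
  have hdotS : ∀ i, (fun _ => (1:ℝ)) ⬝ᵥ (P *ᵥ (Pi.single i 1 : Fin m → ℝ) + q) = S i := by
    intro i; rw [hcol i]; simp [dotProduct, hS_def]
  have hdotT : (fun _ => (1:ℝ)) ⬝ᵥ
      (P *ᵥ ((a * ((m:ℝ)-1)/m) • (1 : Fin m → ℝ)) + q) = T := by
    rw [Matrix.mulVec_smul]
    simp only [dotProduct, Pi.add_apply, Pi.smul_apply, smul_eq_mul, one_mul]
    rw [Finset.sum_add_distrib, ← Finset.mul_sum, hT_def, hQ_def]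
    congr 1
    congr 1
    exact Finset.sum_congr rfl fun j _ => hrow j
  -- finish: the sup is at least the value at one of the candidate points
  have finish : ∀ h₀ : Fin m → ℝ, h₀ ∈ badU m →
      ((m:ℝ)-1) / (6 * Real.sqrt m) ≤ (fun _ => (1:ℝ)) ⬝ᵥ (P *ᵥ h₀ + q) →
      ((((m : ℝ) - 1) / (6 * Real.sqrt m) : ℝ) : EReal) ≤
        ⨆ h : badU m, (((fun _ => (1:ℝ)) ⬝ᵥ (P *ᵥ (h : Fin m → ℝ) + q) : ℝ) : EReal) := by
    intro h₀ hmem hval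
    exact le_trans (EReal.coe_le_coe_iff.2 hval)
      (le_iSup (fun h : badU m =>
        (((fun _ => (1:ℝ)) ⬝ᵥ (P *ᵥ (h : Fin m → ℝ) + q) : ℝ) : EReal)) ⟨h₀, hmem⟩)
  rcases le_max_iff.1 hbZ with hcase | hcase
  · rcases le_max_iff.1 hcase with hc | hc
    · exact finish 0 (badU_zero m) (by rw [hdotQ]; exact hc)
    · exact finish _ (by
        have := badU_center m hm0
        rwa [← ha_def, show (a * ((m:ℝ)-1)/m) = a * ((m:ℝ)-1)/m from rfl] at this)
        (by rw [hdotT]; exact hc)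
  · exact finish _ (badU_single m i0) (by rw [hdotS i0]; exact hcase)
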